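/- For every f ∈ L¹[0,1] with ‖f‖₁ = 1, there exists g ∈ L¹[0,1] with ‖g‖₁ = 1 such that ‖f + g‖₁ = 1 and ‖f − g‖₁ = 1. -/

import Mathlib

open MeasureTheory Set
open scoped ENNReal NNReal

lemma eLpNorm_one_eq_lintegral_nnnorm' {α E : Type*} [MeasurableSpace α] [NormedAddCommGroup E]
    {f : α → E} {μ : Measure α} : eLpNorm f 1 μ = ∫⁻ x, (‖f x‖₊ : ℝ≥0∞) ∂μ :=
  eLpNorm_one_eq_lintegral_enorm

lemma ofReal_integral_norm_eq_lintegral_nnnorm' {α E : Type*} [MeasurableSpace α]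
    [NormedAddCommGroup E] {μ : Measure α} {f : α → E} (hf : Integrable f μ) :
    ENNReal.ofReal (∫ x, ‖f x‖ ∂μ) = ∫⁻ x, (‖f x‖₊ : ℝ≥0∞) ∂μ :=
  ofReal_integral_norm_eq_lintegral_enorm hf

theorem stmt13
    (f : Lp ℝ 1 (volume.restrict (Set.Icc (0:ℝ) 1))) (hf : ‖f‖ = 1) :
    ∃ g : Lp ℝ 1 (volume.restrict (Set.Icc (0:ℝ) 1)),
      ‖g‖ = 1 ∧ ‖f + g‖ = 1 ∧ ‖f - g‖ = 1 := by
  have hfi : Integrable (⇑f) (volume.restrict (Set.Icc (0:ℝ) 1)) := L1.integrable_coeFn f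
  have htot : ∫⁻ x, (‖(f : ℝ → ℝ) x‖₊ : ℝ≥0∞) ∂(volume.restrict (Set.Icc (0:ℝ) 1)) = 1 := by
    have h2 : ‖f‖ = (eLpNorm (⇑f) 1 (volume.restrict (Set.Icc (0:ℝ) 1))).toReal := Lp.norm_def f
    rw [hf] at h2
    have := (ENNReal.toReal_eq_one_iff _).mp h2.symm
    rwa [eLpNorm_one_eq_lintegral_nnnorm'] at this
  have hint : ∫ x, ‖(f : ℝ → ℝ) x‖ ∂(volume.restrict (Set.Icc (0:ℝ) 1)) = 1 := by
    have h := ofReal_integral_norm_eq_lintegral_nnnorm' hfi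
    rw [htot] at h
    have hnn : 0 ≤ ∫ x, ‖(f : ℝ → ℝ) x‖ ∂(volume.restrict (Set.Icc (0:ℝ) 1)) :=
      integral_nonneg fun x => norm_nonneg _
    calc ∫ x, ‖(f : ℝ → ℝ) x‖ ∂(volume.restrict (Set.Icc (0:ℝ) 1))
        = (ENNReal.ofReal (∫ x, ‖(f : ℝ → ℝ) x‖ ∂(volume.restrict (Set.Icc (0:ℝ) 1)))).toReal :=
          (ENNReal.toReal_ofReal hnn).symm
      _ = 1 := by rw [h]; simp
  set ψ : ℝ → ℝ := fun t => ∫ x in (0:ℝ)..t, ‖(f : ℝ → ℝ) x‖ ∂(volume.restrict (Set.Icc (0:ℝ) 1))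
    with hψ
  have hcont : Continuous ψ := hfi.norm.continuous_primitive 0
  have hψ0 : ψ 0 = 0 := intervalIntegral.integral_same
  have hIoc : (volume.restrict (Set.Icc (0:ℝ) 1)).restrict (Ioc (0:ℝ) 1)
      = volume.restrict (Set.Icc (0:ℝ) 1) := by
    have h1 : Ioc (0:ℝ) 1 =ᵐ[volume.restrict (Set.Icc (0:ℝ) 1)] univ := by
      rw [ae_eq_univ, Measure.restrict_apply measurableSet_Ioc.compl]
      refine measure_mono_null ?_ (Real.volume_singleton (a := (0:ℝ)))
      rintro x ⟨hx1, hx2, hx3⟩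
      simp only [mem_compl_iff, mem_Ioc, not_and_or, not_lt, not_le] at hx1
      rcases hx1 with h | h
      · exact le_antisymm h hx2
      · exact absurd hx3 (not_le.mpr h)
    rw [Measure.restrict_congr_set h1, Measure.restrict_univ]
  have hψ1 : ψ 1 = 1 := by
    show ∫ x in (0:ℝ)..(1:ℝ), ‖(f : ℝ → ℝ) x‖ ∂(volume.restrict (Set.Icc (0:ℝ) 1)) = 1
    rw [intervalIntegral.integral_of_le zero_le_one]
    show ∫ x, ‖(f : ℝ → ℝ) x‖
        ∂((volume.restrict (Set.Icc (0:ℝ) 1)).restrict (Ioc (0:ℝ) 1)) = 1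
    rw [hIoc, hint]
  obtain ⟨t₀, ht₀mem, ht₀⟩ : ∃ t₀ ∈ Icc (0:ℝ) 1, ψ t₀ = 1/2 := by
    have h := intermediate_value_Icc zero_le_one hcont.continuousOn
    have h2 : (1/2 : ℝ) ∈ Icc (ψ 0) (ψ 1) := by rw [hψ0, hψ1]; norm_num
    obtain ⟨t₀, ht, he⟩ := h h2
    exact ⟨t₀, ht, he⟩
  have hhalfR : (ENNReal.ofReal (1/2 : ℝ)) = 1/2 := by
    rw [ENNReal.ofReal_div_of_pos (by norm_num), ENNReal.ofReal_one, ENNReal.ofReal_ofNat]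
  have hresA : (volume.restrict (Set.Icc (0:ℝ) 1)).restrict (Iic t₀)
      = (volume.restrict (Set.Icc (0:ℝ) 1)).restrict (Ioc 0 t₀) := by
    refine Measure.restrict_congr_set ?_
    rw [ae_eq_set]
    constructor
    · rw [Measure.restrict_apply (measurableSet_Iic.diff measurableSet_Ioc)]
      refine measure_mono_null ?_ (Real.volume_singleton (a := (0:ℝ)))
      rintro x ⟨⟨hx1, hx2⟩, hx3, _⟩
      simp only [mem_Ioc, not_and_or, not_lt, not_le] at hx2
      rcases hx2 with h | h
      · exact le_antisymm h hx3
      · exact absurd hx1 (not_le.mpr h)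
    · refine measure_mono_null ?_ (measure_empty (μ := volume.restrict (Set.Icc (0:ℝ) 1)))
      rintro x ⟨⟨_, hx2⟩, hx3⟩
      exact hx3 hx2
  have hhalf : ∫⁻ x in Iic t₀, (‖(f : ℝ → ℝ) x‖₊ : ℝ≥0∞)
      ∂(volume.restrict (Set.Icc (0:ℝ) 1)) = 1/2 := by
    show ∫⁻ x, (‖(f : ℝ → ℝ) x‖₊ : ℝ≥0∞)
        ∂((volume.restrict (Set.Icc (0:ℝ) 1)).restrict (Iic t₀)) = 1/2
    rw [hresA, ← ofReal_integral_norm_eq_lintegral_nnnorm' (hfi.restrict)]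
    have heq : ψ t₀ = ∫ x, ‖(f : ℝ → ℝ) x‖
        ∂((volume.restrict (Set.Icc (0:ℝ) 1)).restrict (Ioc 0 t₀)) := by
      show ∫ x in (0:ℝ)..t₀, ‖(f : ℝ → ℝ) x‖ ∂(volume.restrict (Set.Icc (0:ℝ) 1)) = _
      rw [intervalIntegral.integral_of_le ht₀mem.1]
    rw [← heq, ht₀, hhalfR]
  have hhalfc : ∫⁻ x in (Iic t₀)ᶜ, (‖(f : ℝ → ℝ) x‖₊ : ℝ≥0∞)
      ∂(volume.restrict (Set.Icc (0:ℝ) 1)) = 1/2 := by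
    have hadd := lintegral_add_compl (fun x => (‖(f : ℝ → ℝ) x‖₊ : ℝ≥0∞)) (measurableSet_Iic (a := t₀))
      (μ := volume.restrict (Set.Icc (0:ℝ) 1))
    rw [htot, hhalf] at hadd
    exact (ENNReal.add_right_inj (by norm_num)).mp
      (hadd.trans (ENNReal.add_halves 1).symm)
  set G : ℝ → ℝ := (Iic t₀).piecewise (⇑f) (-⇑f) with hG
  have hGnorm : ∀ x, (‖G x‖₊ : ℝ≥0∞) = (‖(f : ℝ → ℝ) x‖₊ : ℝ≥0∞) := by
    intro x
    by_cases h : x ∈ Iic t₀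
    · rw [hG, Set.piecewise_eq_of_mem _ _ _ h]
    · rw [hG, Set.piecewise_eq_of_notMem _ _ _ h]; simp
  have hGmem : MemLp G 1 (volume.restrict (Set.Icc (0:ℝ) 1)) := by
    constructor
    · exact AEStronglyMeasurable.piecewise measurableSet_Iic
        (Lp.aestronglyMeasurable f).restrict (Lp.aestronglyMeasurable f).neg.restrict
    · rw [eLpNorm_one_eq_lintegral_nnnorm']
      rw [lintegral_congr hGnorm, htot]
      exact ENNReal.one_lt_top
  refine ⟨hGmem.toLp G, ?_, ?_, ?_⟩
  · rw [Lp.norm_toLp, eLpNorm_one_eq_lintegral_nnnorm', lintegral_congr hGnorm, htot]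
    simp
  · have hcoe : ⇑(f + hGmem.toLp G) =ᵐ[volume.restrict (Set.Icc (0:ℝ) 1)]
        fun x => (f : ℝ → ℝ) x + G x := by
      filter_upwards [Lp.coeFn_add f (hGmem.toLp G), hGmem.coeFn_toLp] with x h1 h2
      rw [h1, Pi.add_apply, h2]
    rw [Lp.norm_def, eLpNorm_congr_ae hcoe, eLpNorm_one_eq_lintegral_nnnorm']
    have hkey : ∫⁻ x, (‖(f : ℝ → ℝ) x + G x‖₊ : ℝ≥0∞) ∂(volume.restrict (Set.Icc (0:ℝ) 1))
        = ∫⁻ x in Iic t₀, 2 * (‖(f : ℝ → ℝ) x‖₊ : ℝ≥0∞)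
            ∂(volume.restrict (Set.Icc (0:ℝ) 1)) := by
      rw [← lintegral_indicator measurableSet_Iic _]
      refine lintegral_congr fun x => ?_
      by_cases h : x ∈ Iic t₀
      · rw [Set.indicator_of_mem h, hG, Set.piecewise_eq_of_mem _ _ _ h, ← two_mul,
          nnnorm_mul]
        push_cast
        norm_num
      · rw [Set.indicator_of_notMem h, hG, Set.piecewise_eq_of_notMem _ _ _ h]
        simp
    rw [hkey, lintegral_const_mul' _ _ (by norm_num), hhalf]
    rw [ENNReal.mul_div_cancel' (by norm_num) (by norm_num)]
    simp
  · have hcoe : ⇑(f - hGmem.toLp G) =ᵐ[volume.restrict (Set.Icc (0:ℝ) 1)]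
        fun x => (f : ℝ → ℝ) x - G x := by
      filter_upwards [Lp.coeFn_sub f (hGmem.toLp G), hGmem.coeFn_toLp] with x h1 h2
      rw [h1, Pi.sub_apply, h2]
    rw [Lp.norm_def, eLpNorm_congr_ae hcoe, eLpNorm_one_eq_lintegral_nnnorm']
    have hkey : ∫⁻ x, (‖(f : ℝ → ℝ) x - G x‖₊ : ℝ≥0∞) ∂(volume.restrict (Set.Icc (0:ℝ) 1))
        = ∫⁻ x in (Iic t₀)ᶜ, 2 * (‖(f : ℝ → ℝ) x‖₊ : ℝ≥0∞)
            ∂(volume.restrict (Set.Icc (0:ℝ) 1)) := by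
      rw [← lintegral_indicator measurableSet_Iic.compl _]
      refine lintegral_congr fun x => ?_
      by_cases h : x ∈ Iic t₀
      · rw [Set.indicator_of_notMem (by simpa using h), hG,
          Set.piecewise_eq_of_mem _ _ _ h]
        simp
      · rw [Set.indicator_of_mem (by simpa using h), hG,
          Set.piecewise_eq_of_notMem _ _ _ h, Pi.neg_apply, sub_neg_eq_add, ← two_mul, nnnorm_mul]
        push_cast
        norm_num
    rw [hkey, lintegral_const_mul' _ _ (by norm_num), hhalfc]
    rw [ENNReal.mul_div_cancel' (by norm_num) (by norm_num)]
    simp
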